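/- Let n ∈ ℕ with n ≥ 2 and let G be a nonempty bounded subset of ℝⁿ. Let A₀ : ∂𝔹_n → ℂ and A₁ : ∂𝔹_n × ℝ → ℂ be continuous, b₀ ∈ ℂ, and B₁, C : ℝⁿ → ℂ be continuous, and let S : ℝⁿ∖{0} → ℂ be defined by S(x) ≡ |x|^{2−n}A₀(x/|x|) + |x|^{3−n}A₁(x/|x|, |x|) + b₀ ln|x| + B₁(x) ln|x| + C(x). Assume in addition that the function A(θ,r) ≡ A₀(θ) + rA₁(θ,r) is Lipschitz continuous on ∂𝔹_n × [0, diam(G)] with respect to the distance |θ'−θ''| + |r'−r''|, and that B ≡ b₀ + B₁ and C are continuously differentiable on ℝⁿ. Then sup{ (|x'−y|^{n−1}/|x'−x''|) |S(x'−y) − S(x''−y)| : x', x'' ∈ G, x' ≠ x'', y ∈ G∖𝔹_n(x', 2|x'−x''|) } < +∞. -/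

import Mathlib

open Metric Set

lemma aux_rpow_diff {p m a b : ℝ} (hp : p ≤ 0) (hm : 0 < m) (ha : m ≤ a) (hb : m ≤ b) :
    |a ^ p - b ^ p| ≤ |p| * m ^ (p - 1) * |a - b| := by
  have hbound : ∀ t ∈ Ici m, ‖deriv (fun t : ℝ => t ^ p) t‖ ≤ |p| * m ^ (p - 1) := by
    intro t ht
    have ht0 : 0 < t := lt_of_lt_of_le hm ht
    rw [Real.deriv_rpow_const t p]
    rw [Real.norm_eq_abs, abs_mul, abs_of_nonneg (Real.rpow_nonneg ht0.le _)]
    exact mul_le_mul_of_nonneg_left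
      (Real.rpow_le_rpow_of_nonpos hm ht (by linarith)) (abs_nonneg p)
  have key := (convex_Ici m).norm_image_sub_le_of_norm_deriv_le
      (fun t ht => Real.differentiableAt_rpow_const_of_ne p
        (ne_of_gt (lt_of_lt_of_le hm ht))) hbound hb ha
  simpa [Real.norm_eq_abs] using key

lemma aux_log_diff {m a b : ℝ} (hm : 0 < m) (ha : m ≤ a) (hb : m ≤ b) :
    |Real.log a - Real.log b| ≤ m⁻¹ * |a - b| := by
  have hbound : ∀ t ∈ Ici m, ‖deriv Real.log t‖ ≤ m⁻¹ := by
    intro t ht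
    rw [Real.deriv_log, Real.norm_eq_abs,
      abs_of_nonneg (inv_nonneg.2 (le_trans hm.le ht))]
    exact inv_anti₀ hm ht
  have key := (convex_Ici m).norm_image_sub_le_of_norm_deriv_le
      (fun t ht => Real.differentiableAt_log (ne_of_gt (lt_of_lt_of_le hm ht))) hbound hb ha
  simpa [Real.norm_eq_abs] using key

lemma aux_abs_log {s : ℝ} (hs : 0 < s) : |Real.log s| ≤ s⁻¹ + s := by
  rcases le_or_gt 1 s with h | h
  · rw [abs_of_nonneg (Real.log_nonneg h)]
    have h1 := Real.log_le_sub_one_of_pos hs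
    have h2 : (0:ℝ) ≤ s⁻¹ := by positivity
    linarith
  · rw [abs_of_neg (Real.log_neg hs h)]
    have h2 := Real.log_le_sub_one_of_pos (inv_pos.2 hs)
    rw [Real.log_inv] at h2
    linarith

lemma aux_unit {E : Type*} [NormedAddCommGroup E] [NormedSpace ℝ E] {u v : E}
    (hu : u ≠ 0) (hv : v ≠ 0) :
    ‖‖u‖⁻¹ • u - ‖v‖⁻¹ • v‖ ≤ 2 * ‖u - v‖ / ‖u‖ := by
  have hu0 : (0:ℝ) < ‖u‖ := norm_pos_iff.2 hu
  have hv0 : (0:ℝ) < ‖v‖ := norm_pos_iff.2 hv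
  have hsplit : ‖u‖⁻¹ • u - ‖v‖⁻¹ • v = ‖u‖⁻¹ • (u - v) + (‖u‖⁻¹ - ‖v‖⁻¹) • v := by
    rw [smul_sub, sub_smul]; abel
  rw [hsplit]
  have h1 : ‖‖u‖⁻¹ • (u - v)‖ = ‖u‖⁻¹ * ‖u - v‖ := by
    rw [norm_smul, Real.norm_eq_abs, abs_of_pos (inv_pos.2 hu0)]
  have h3 : |‖v‖ - ‖u‖| ≤ ‖u - v‖ := by
    rw [norm_sub_rev]; exact abs_norm_sub_norm_le v u
  have h2 : ‖(‖u‖⁻¹ - ‖v‖⁻¹) • v‖ ≤ ‖u - v‖ / ‖u‖ := by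
    rw [norm_smul, Real.norm_eq_abs]
    have he : ‖u‖⁻¹ - ‖v‖⁻¹ = (‖v‖ - ‖u‖) * (‖u‖⁻¹ * ‖v‖⁻¹) := by
      field_simp
    rw [he, abs_mul, abs_of_pos (by positivity : (0:ℝ) < ‖u‖⁻¹ * ‖v‖⁻¹)]
    have heq : |‖v‖ - ‖u‖| * (‖u‖⁻¹ * ‖v‖⁻¹) * ‖v‖ = |‖v‖ - ‖u‖| / ‖u‖ := by
      field_simp
    rw [heq]
    gcongr
  calc ‖‖u‖⁻¹ • (u - v) + (‖u‖⁻¹ - ‖v‖⁻¹) • v‖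
      ≤ ‖‖u‖⁻¹ • (u - v)‖ + ‖(‖u‖⁻¹ - ‖v‖⁻¹) • v‖ := norm_add_le _ _
    _ ≤ ‖u‖⁻¹ * ‖u - v‖ + ‖u - v‖ / ‖u‖ := by rw [h1]; exact add_le_add_right h2 _
    _ = 2 * ‖u - v‖ / ‖u‖ := by field_simp; ring

lemma aux_lip {n : ℕ} {f : EuclideanSpace ℝ (Fin n) → ℂ} (hf : ContDiff ℝ 1 f) (R : ℝ) :
    ∃ K : ℝ, 0 ≤ K ∧ ∀ x ∈ closedBall (0 : EuclideanSpace ℝ (Fin n)) R,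
      ∀ y ∈ closedBall (0 : EuclideanSpace ℝ (Fin n)) R, ‖f x - f y‖ ≤ K * ‖x - y‖ := by
  obtain ⟨K, hK⟩ := (isCompact_closedBall (0 : EuclideanSpace ℝ (Fin n)) R).exists_bound_of_continuousOn
      (hf.continuous_fderiv one_ne_zero).continuousOn
  refine ⟨max K 0, le_max_right _ _, fun x hx y hy => ?_⟩
  exact (convex_closedBall _ _).norm_image_sub_le_of_norm_fderiv_le
    (fun z _ => (hf.differentiable one_ne_zero) z)
    (fun z hz => le_trans (hK z hz) (le_max_left _ _)) hy hx

set_option maxHeartbeats 2000000 in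
/-- with `S` as in the general form of a fundamental solution,
`A(θ,r) = A₀(θ) + r A₁(θ,r)` Lipschitz continuous on `∂𝔹_n × [0, diam G]`
(with constant `L` for the distance `‖θ'-θ''‖ + |r'-r''|`) and `B = b₀ + B₁`
and `C` continuously differentiable, one has
`sup { (‖x'-y‖^(n-1)/‖x'-x''‖) ‖S(x'-y) - S(x''-y)‖ } < ∞`, the supremum being
over `x', x'' ∈ G`, `x' ≠ x''`, `y ∈ G ∖ 𝔹_n(x', 2‖x'-x''‖)`. -/
theorem stmt_10 {n : ℕ} (hn : 2 ≤ n) (G : Set (EuclideanSpace ℝ (Fin n)))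
    (hGne : G.Nonempty) (hGb : Bornology.IsBounded G)
    (A₀ : EuclideanSpace ℝ (Fin n) → ℂ)
    (A₁ : EuclideanSpace ℝ (Fin n) → ℝ → ℂ)
    (b₀ : ℂ) (B₁ C : EuclideanSpace ℝ (Fin n) → ℂ)
    (hA₀ : ContinuousOn A₀ (sphere (0 : EuclideanSpace ℝ (Fin n)) 1))
    (hA₁ : Continuous fun p : EuclideanSpace ℝ (Fin n) × ℝ => A₁ p.1 p.2)
    (hB₁ : Continuous B₁) (hC : Continuous C)
    (S : EuclideanSpace ℝ (Fin n) → ℂ)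
    (hS : ∀ x : EuclideanSpace ℝ (Fin n), x ≠ 0 →
      S x = (‖x‖ ^ ((2 : ℝ) - n) : ℝ) * A₀ (‖x‖⁻¹ • x)
        + (‖x‖ ^ ((3 : ℝ) - n) : ℝ) * A₁ (‖x‖⁻¹ • x) ‖x‖
        + b₀ * (Real.log ‖x‖ : ℝ)
        + B₁ x * (Real.log ‖x‖ : ℝ) + C x)
    (L : ℝ)
    (hA : ∀ p ∈ (sphere (0 : EuclideanSpace ℝ (Fin n)) 1) ×ˢ (Icc 0 (diam G)),
          ∀ q ∈ (sphere (0 : EuclideanSpace ℝ (Fin n)) 1) ×ˢ (Icc 0 (diam G)),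
            ‖(A₀ p.1 + p.2 * A₁ p.1 p.2) - (A₀ q.1 + q.2 * A₁ q.1 q.2)‖ ≤
              L * (‖p.1 - q.1‖ + |p.2 - q.2|))
    (hB : ContDiff ℝ 1 fun x => b₀ + B₁ x) (hC1 : ContDiff ℝ 1 C) :
    ∃ M : ℝ, ∀ x' ∈ G, ∀ x'' ∈ G, x' ≠ x'' → ∀ y ∈ G,
      y ∉ ball x' (2 * ‖x' - x''‖) →
        ‖x' - y‖ ^ ((n : ℝ) - 1) * ‖S (x' - y) - S (x'' - y)‖ ≤ M * ‖x' - x''‖ := by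
  have hnR : (2:ℝ) ≤ (n:ℝ) := by exact_mod_cast hn
  set D := diam G with hD_def
  have hD0 : 0 ≤ D := diam_nonneg
  set p : ℝ := 2 - n with hp_def
  have hp0 : p ≤ 0 := by rw [hp_def]; linarith
  -- restated Lipschitz hypothesis
  have hA' : ∀ θ₁ ∈ sphere (0 : EuclideanSpace ℝ (Fin n)) 1, ∀ r₁ ∈ Icc (0:ℝ) D,
      ∀ θ₂ ∈ sphere (0 : EuclideanSpace ℝ (Fin n)) 1, ∀ r₂ ∈ Icc (0:ℝ) D,
      ‖(A₀ θ₁ + (r₁:ℂ) * A₁ θ₁ r₁) - (A₀ θ₂ + (r₂:ℂ) * A₁ θ₂ r₂)‖ ≤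
        L * (‖θ₁ - θ₂‖ + |r₁ - r₂|) :=
    fun θ₁ h1 r₁ hr1 θ₂ h2 r₂ hr2 =>
      hA (θ₁, r₁) (Set.mem_prod.2 ⟨h1, hr1⟩) (θ₂, r₂) (Set.mem_prod.2 ⟨h2, hr2⟩)
  -- L is nonnegative
  have hL0 : 0 ≤ L := by
    have h0 : (0:ℕ) < n := by omega
    set e : EuclideanSpace ℝ (Fin n) := EuclideanSpace.single ⟨0, h0⟩ (1:ℝ) with he_def
    have he : ‖e‖ = 1 := by rw [he_def, EuclideanSpace.norm_single]; norm_num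
    have hes : e ∈ sphere (0 : EuclideanSpace ℝ (Fin n)) 1 := by
      rw [mem_sphere_zero_iff_norm]; exact he
    have hes' : -e ∈ sphere (0 : EuclideanSpace ℝ (Fin n)) 1 := by
      rw [mem_sphere_zero_iff_norm, norm_neg]; exact he
    have h0D : (0:ℝ) ∈ Icc (0:ℝ) D := ⟨le_refl _, hD0⟩
    have hN := hA' e hes 0 h0D (-e) hes' 0 h0D
    have hee : ‖e - -e‖ = 2 := by
      rw [sub_neg_eq_add, ← two_smul ℝ e, norm_smul]; simp [he]
    rw [hee, sub_self, abs_zero, add_zero] at hN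
    have h0N : (0:ℝ) ≤ L * 2 := le_trans (norm_nonneg _) hN
    linarith
  -- bound for A on the compact set
  have hcontA : ContinuousOn
      (fun q : EuclideanSpace ℝ (Fin n) × ℝ => A₀ q.1 + (q.2:ℂ) * A₁ q.1 q.2)
      ((sphere (0 : EuclideanSpace ℝ (Fin n)) 1) ×ˢ (Icc (0:ℝ) D)) := by
    apply ContinuousOn.add
    · exact hA₀.comp continuous_fst.continuousOn (fun q hq => hq.1)
    · exact ((Complex.continuous_ofReal.comp continuous_snd).mul hA₁).continuousOn
  obtain ⟨MA₀, hMA₀⟩ :=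
    ((isCompact_sphere (0 : EuclideanSpace ℝ (Fin n)) 1).prod
      isCompact_Icc).exists_bound_of_continuousOn hcontA
  set MA := max MA₀ 0 with hMA_def
  have hMA0 : 0 ≤ MA := le_max_right _ _
  have hMA : ∀ θ ∈ sphere (0 : EuclideanSpace ℝ (Fin n)) 1, ∀ r ∈ Icc (0:ℝ) D,
      ‖A₀ θ + (r:ℂ) * A₁ θ r‖ ≤ MA := fun θ hθ r hr =>
    le_trans (hMA₀ (θ, r) (Set.mem_prod.2 ⟨hθ, hr⟩)) (le_max_left _ _)
  -- bound for B on the closed ball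
  obtain ⟨MB₀, hMB₀⟩ := (isCompact_closedBall (0 : EuclideanSpace ℝ (Fin n))
      D).exists_bound_of_continuousOn hB.continuous.continuousOn
  set MB := max MB₀ 0 with hMB_def
  have hMB0 : 0 ≤ MB := le_max_right _ _
  -- Lipschitz constants for B and C
  obtain ⟨LB, hLB0, hLB⟩ := aux_lip hB D
  obtain ⟨LC, hLC0, hLC⟩ := aux_lip hC1 D
  set K1 := (max 1 D) ^ (1 - p) with hK1_def
  set K2 := (max 1 D) ^ (-p) with hK2_def
  refine ⟨|p| * 2^(1-p) * MA + 2^(-p) * L * (2+D) + 2*MB*K2 + LB*(2*K2 + K1*D) + K1*LC, ?_⟩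
  intro x' hx' x'' hx'' hne y hy hyb
  set a := ‖x' - y‖ with ha_def
  set b := ‖x'' - y‖ with hb_def
  set d := ‖x' - x''‖ with hd_def
  have hd0 : 0 < d := by rw [hd_def]; exact norm_pos_iff.2 (sub_ne_zero.2 hne)
  have h2d : 2 * d ≤ a := by
    by_contra hcon
    push_neg at hcon
    exact hyb (mem_ball.2 (by rw [dist_eq_norm, norm_sub_rev, ← ha_def]; exact hcon))
  have ha0 : 0 < a := lt_of_lt_of_le (by linarith) h2d
  have hu0 : x' - y ≠ 0 :=
    norm_pos_iff.1 (show (0:ℝ) < ‖x' - y‖ by rw [← ha_def]; exact ha0)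
  have hdab : ‖(x' - y) - (x'' - y)‖ = d := by
    rw [sub_sub_sub_cancel_right, ← hd_def]
  have hba : a - b ≤ d := by
    have h := norm_sub_norm_le (x' - y) (x'' - y)
    rw [← ha_def, ← hb_def, hdab] at h; exact h
  have habs : |a - b| ≤ d := by
    have h2 := abs_norm_sub_norm_le (x' - y) (x'' - y)
    rw [← ha_def, ← hb_def, hdab] at h2; exact h2
  have hb_lb : a / 2 ≤ b := by linarith
  have hb0 : 0 < b := by linarith
  have hv0 : x'' - y ≠ 0 :=
    norm_pos_iff.1 (show (0:ℝ) < ‖x'' - y‖ by rw [← hb_def]; exact hb0)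
  have haD : a ≤ D := by
    have h := dist_le_diam_of_mem hGb hx' hy
    rw [dist_eq_norm, ← ha_def, ← hD_def] at h; exact h
  have hbD : b ≤ D := by
    have h := dist_le_diam_of_mem hGb hx'' hy
    rw [dist_eq_norm, ← hb_def, ← hD_def] at h; exact h
  -- unit vectors
  have hθa : a⁻¹ • (x' - y) ∈ sphere (0 : EuclideanSpace ℝ (Fin n)) 1 := by
    rw [mem_sphere_zero_iff_norm, norm_smul, Real.norm_eq_abs,
      abs_of_pos (inv_pos.2 ha0), ← ha_def, inv_mul_cancel₀ (ne_of_gt ha0)]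
  have hθb : b⁻¹ • (x'' - y) ∈ sphere (0 : EuclideanSpace ℝ (Fin n)) 1 := by
    rw [mem_sphere_zero_iff_norm, norm_smul, Real.norm_eq_abs,
      abs_of_pos (inv_pos.2 hb0), ← hb_def, inv_mul_cancel₀ (ne_of_gt hb0)]
  have hAa : ‖A₀ (a⁻¹ • (x' - y)) + (a:ℂ) * A₁ (a⁻¹ • (x' - y)) a‖ ≤ MA :=
    hMA _ hθa a ⟨ha0.le, haD⟩
  have hAdiff : ‖(A₀ (a⁻¹ • (x' - y)) + (a:ℂ) * A₁ (a⁻¹ • (x' - y)) a)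
      - (A₀ (b⁻¹ • (x'' - y)) + (b:ℂ) * A₁ (b⁻¹ • (x'' - y)) b)‖ ≤ L * (2*d/a + d) := by
    have h := hA' _ hθa a ⟨ha0.le, haD⟩ _ hθb b ⟨hb0.le, hbD⟩
    have hunit := aux_unit hu0 hv0
    rw [← ha_def, ← hb_def, hdab] at hunit
    refine h.trans (mul_le_mul_of_nonneg_left ?_ hL0)
    linarith
  have hpd : |a^p - b^p| ≤ |p| * (a/2)^(p-1) * d := by
    refine (aux_rpow_diff hp0 (half_pos ha0) (by linarith) hb_lb).trans ?_
    exact mul_le_mul_of_nonneg_left habs (by positivity)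
  have hld : |Real.log a - Real.log b| ≤ (a/2)⁻¹ * d := by
    refine (aux_log_diff (half_pos ha0) (by linarith) hb_lb).trans ?_
    exact mul_le_mul_of_nonneg_left habs (by positivity)
  have hBmem_a : x' - y ∈ closedBall (0 : EuclideanSpace ℝ (Fin n)) D :=
    mem_closedBall_zero_iff.2 (by rw [← ha_def]; exact haD)
  have hBmem_b : x'' - y ∈ closedBall (0 : EuclideanSpace ℝ (Fin n)) D :=
    mem_closedBall_zero_iff.2 (by rw [← hb_def]; exact hbD)
  have hMBa : ‖b₀ + B₁ (x' - y)‖ ≤ MB :=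
    le_trans (hMB₀ _ hBmem_a) (le_max_left _ _)
  have hBd : ‖(b₀ + B₁ (x' - y)) - (b₀ + B₁ (x'' - y))‖ ≤ LB * d := by
    have h := hLB (x' - y) hBmem_a (x'' - y) hBmem_b
    rw [hdab] at h; exact h
  have hCd : ‖C (x' - y) - C (x'' - y)‖ ≤ LC * d := by
    have h := hLC (x' - y) hBmem_a (x'' - y) hBmem_b
    rw [hdab] at h; exact h
  have hlb : |Real.log b| ≤ (a/2)⁻¹ + D :=
    le_trans (aux_abs_log hb0) (add_le_add (inv_anti₀ (half_pos ha0) hb_lb) hbD)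
  -- decomposition of S
  have hSa := hS (x' - y) hu0
  have hSb := hS (x'' - y) hv0
  rw [← ha_def] at hSa
  rw [← hb_def] at hSb
  have h3a : a ^ ((3:ℝ) - (n:ℝ)) = a ^ p * a := by
    rw [show (3:ℝ) - (n:ℝ) = p + 1 by rw [hp_def]; ring, Real.rpow_add_one (ne_of_gt ha0)]
  have h3b : b ^ ((3:ℝ) - (n:ℝ)) = b ^ p * b := by
    rw [show (3:ℝ) - (n:ℝ) = p + 1 by rw [hp_def]; ring, Real.rpow_add_one (ne_of_gt hb0)]
  rw [h3a] at hSa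
  rw [h3b] at hSb
  have hdecomp : S (x' - y) - S (x'' - y) =
      ((a ^ p - b ^ p : ℝ) : ℂ) * (A₀ (a⁻¹ • (x' - y)) + (a:ℂ) * A₁ (a⁻¹ • (x' - y)) a)
      + ((b ^ p : ℝ) : ℂ) * ((A₀ (a⁻¹ • (x' - y)) + (a:ℂ) * A₁ (a⁻¹ • (x' - y)) a)
          - (A₀ (b⁻¹ • (x'' - y)) + (b:ℂ) * A₁ (b⁻¹ • (x'' - y)) b))
      + (b₀ + B₁ (x' - y)) * ((Real.log a - Real.log b : ℝ) : ℂ)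
      + ((b₀ + B₁ (x' - y)) - (b₀ + B₁ (x'' - y))) * ((Real.log b : ℝ) : ℂ)
      + (C (x' - y) - C (x'' - y)) := by
    rw [hSa, hSb]; push_cast; ring
  have hnormle : ‖S (x' - y) - S (x'' - y)‖ ≤
      |a^p - b^p| * MA + b^p * (L * (2*d/a + d)) + MB * ((a/2)⁻¹ * d)
      + (LB*d) * ((a/2)⁻¹ + D) + LC * d := by
    rw [hdecomp]
    have n1 : ‖((a ^ p - b ^ p : ℝ) : ℂ) *
        (A₀ (a⁻¹ • (x' - y)) + (a:ℂ) * A₁ (a⁻¹ • (x' - y)) a)‖ ≤ |a^p - b^p| * MA := by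
      rw [norm_mul, Complex.norm_real, Real.norm_eq_abs]
      exact mul_le_mul_of_nonneg_left hAa (abs_nonneg _)
    have n2 : ‖((b ^ p : ℝ) : ℂ) * ((A₀ (a⁻¹ • (x' - y)) + (a:ℂ) * A₁ (a⁻¹ • (x' - y)) a)
        - (A₀ (b⁻¹ • (x'' - y)) + (b:ℂ) * A₁ (b⁻¹ • (x'' - y)) b))‖
        ≤ b^p * (L * (2*d/a + d)) := by
      rw [norm_mul, Complex.norm_real, Real.norm_eq_abs,
        abs_of_nonneg (Real.rpow_nonneg hb0.le p)]
      exact mul_le_mul_of_nonneg_left hAdiff (Real.rpow_nonneg hb0.le p)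
    have n3 : ‖(b₀ + B₁ (x' - y)) * ((Real.log a - Real.log b : ℝ) : ℂ)‖
        ≤ MB * ((a/2)⁻¹ * d) := by
      rw [norm_mul, Complex.norm_real, Real.norm_eq_abs]
      exact mul_le_mul hMBa hld (abs_nonneg _) hMB0
    have n4 : ‖((b₀ + B₁ (x' - y)) - (b₀ + B₁ (x'' - y))) * ((Real.log b : ℝ) : ℂ)‖
        ≤ (LB*d) * ((a/2)⁻¹ + D) := by
      rw [norm_mul, Complex.norm_real, Real.norm_eq_abs]
      exact mul_le_mul hBd hlb (abs_nonneg _) (mul_nonneg hLB0 hd0.le)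
    refine le_trans (norm_add_le _ _) ?_
    refine le_trans (add_le_add_left (norm_add_le _ _) _) ?_
    refine le_trans (add_le_add_left (add_le_add_left (norm_add_le _ _) _) _) ?_
    refine le_trans (add_le_add_left (add_le_add_left (add_le_add_left
      (norm_add_le _ _) _) _) _) ?_
    exact add_le_add (add_le_add (add_le_add (add_le_add n1 n2) n3) n4) hCd
  -- power identities and bounds
  rw [show ((n:ℝ) - 1) = 1 - p from by rw [hp_def]; ring]
  have hap : 0 ≤ a ^ (1-p) := Real.rpow_nonneg ha0.le _
  have hm1 : a ^ (1-p) * (a/2) ^ (p-1) = 2 ^ (1-p) := by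
    rw [Real.div_rpow ha0.le (by norm_num : (0:ℝ) ≤ 2), div_eq_mul_inv,
      ← Real.rpow_neg (by norm_num : (0:ℝ) ≤ 2), ← mul_assoc, ← Real.rpow_add ha0,
      show (1-p) + (p-1) = 0 by ring, Real.rpow_zero, one_mul,
      show -(p-1) = 1-p by ring]
  have hm2 : a ^ (1-p) * (a/2) ^ p = 2 ^ (-p) * a := by
    rw [Real.div_rpow ha0.le (by norm_num : (0:ℝ) ≤ 2), div_eq_mul_inv,
      ← Real.rpow_neg (by norm_num : (0:ℝ) ≤ 2), ← mul_assoc, ← Real.rpow_add ha0,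
      show (1-p) + p = 1 by ring, Real.rpow_one]
    ring
  have hm3 : a ^ (1-p) * a⁻¹ = a ^ (-p) := by
    rw [← Real.rpow_neg_one a, ← Real.rpow_add ha0]; congr 1; ring
  have hK2a : a ^ (-p) ≤ K2 := by
    rw [hK2_def]
    exact Real.rpow_le_rpow ha0.le (le_trans haD (le_max_right 1 D))
      (by rw [hp_def]; linarith)
  have hK1a : a ^ (1-p) ≤ K1 := by
    rw [hK1_def]
    exact Real.rpow_le_rpow ha0.le (le_trans haD (le_max_right 1 D))
      (by rw [hp_def]; linarith)
  have hK20 : 0 ≤ K2 := le_trans (Real.rpow_nonneg ha0.le _) hK2a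
  have hK10 : 0 ≤ K1 := le_trans hap hK1a
  have E1 : a^(1-p) * (|a^p - b^p| * MA) ≤ |p| * 2^(1-p) * MA * d := by
    calc a^(1-p) * (|a^p - b^p| * MA)
        ≤ a^(1-p) * ((|p| * (a/2)^(p-1) * d) * MA) :=
          mul_le_mul_of_nonneg_left (mul_le_mul_of_nonneg_right hpd hMA0) hap
      _ = (a^(1-p) * (a/2)^(p-1)) * (|p| * d * MA) := by ring
      _ = 2^(1-p) * (|p| * d * MA) := by rw [hm1]
      _ = |p| * 2^(1-p) * MA * d := by ring
  have E2 : a^(1-p) * (b^p * (L*(2*d/a+d))) ≤ 2^(-p) * L * (2+D) * d := by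
    have hbp : b^p ≤ (a/2)^p := Real.rpow_le_rpow_of_nonpos (half_pos ha0) hb_lb hp0
    have hLd : 0 ≤ L * (2*d/a + d) := mul_nonneg hL0 (by positivity)
    have hfe : a * (2*d/a + d) = 2*d + a*d := by field_simp
    calc a^(1-p) * (b^p * (L*(2*d/a+d)))
        ≤ a^(1-p) * ((a/2)^p * (L*(2*d/a+d))) :=
          mul_le_mul_of_nonneg_left (mul_le_mul_of_nonneg_right hbp hLd) hap
      _ = (a^(1-p) * (a/2)^p) * (L*(2*d/a+d)) := by ring
      _ = 2^(-p) * (L * (a * (2*d/a+d))) := by rw [hm2]; ring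
      _ = 2^(-p) * (L * (2*d + a*d)) := by rw [hfe]
      _ ≤ 2^(-p) * (L * ((2+D)*d)) := by
          refine mul_le_mul_of_nonneg_left (mul_le_mul_of_nonneg_left ?_ hL0)
            (Real.rpow_nonneg (by norm_num) _)
          have hDa := mul_le_mul_of_nonneg_right haD hd0.le
          linarith
      _ = 2^(-p) * L * (2+D) * d := by ring
  have E3 : a^(1-p) * (MB * ((a/2)⁻¹ * d)) ≤ 2*MB*K2*d := by
    have hinv : ((a:ℝ)/2)⁻¹ = 2 * a⁻¹ := by
      rw [inv_div, div_eq_mul_inv]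
    calc a^(1-p) * (MB * ((a/2)⁻¹ * d))
        = MB * (a^(1-p) * a⁻¹) * (2*d) := by rw [hinv]; ring
      _ = MB * a^(-p) * (2*d) := by rw [hm3]
      _ ≤ MB * K2 * (2*d) :=
          mul_le_mul_of_nonneg_right (mul_le_mul_of_nonneg_left hK2a hMB0) (by positivity)
      _ = 2*MB*K2*d := by ring
  have E4 : a^(1-p) * ((LB*d) * ((a/2)⁻¹ + D)) ≤ LB*(2*K2 + K1*D)*d := by
    have hinv : ((a:ℝ)/2)⁻¹ = 2 * a⁻¹ := by
      rw [inv_div, div_eq_mul_inv]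
    have hsum : a^(1-p) * ((a/2)⁻¹ + D) ≤ 2*K2 + K1*D := by
      have h1 : a^(1-p) * (a/2)⁻¹ = 2 * a^(-p) := by rw [hinv, ← hm3]; ring
      calc a^(1-p) * ((a/2)⁻¹ + D) = a^(1-p)*(a/2)⁻¹ + a^(1-p)*D := by ring
        _ = 2*a^(-p) + a^(1-p)*D := by rw [h1]
        _ ≤ 2*K2 + K1*D := add_le_add (by linarith) (mul_le_mul_of_nonneg_right hK1a hD0)
    calc a^(1-p) * ((LB*d) * ((a/2)⁻¹ + D))
        = (LB*d) * (a^(1-p) * ((a/2)⁻¹ + D)) := by ring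
      _ ≤ (LB*d) * (2*K2 + K1*D) :=
          mul_le_mul_of_nonneg_left hsum (mul_nonneg hLB0 hd0.le)
      _ = LB*(2*K2+K1*D)*d := by ring
  have E5 : a^(1-p) * (LC*d) ≤ K1*LC*d := by
    calc a^(1-p) * (LC*d) ≤ K1 * (LC*d) :=
        mul_le_mul_of_nonneg_right hK1a (mul_nonneg hLC0 hd0.le)
      _ = K1*LC*d := by ring
  calc a^(1-p) * ‖S (x'-y) - S (x''-y)‖
      ≤ a^(1-p) * (|a^p - b^p| * MA + b^p*(L*(2*d/a+d)) + MB*((a/2)⁻¹*d)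
          + (LB*d)*((a/2)⁻¹+D) + LC*d) :=
        mul_le_mul_of_nonneg_left hnormle hap
    _ = a^(1-p)*(|a^p - b^p| * MA) + a^(1-p)*(b^p*(L*(2*d/a+d)))
        + a^(1-p)*(MB*((a/2)⁻¹*d)) + a^(1-p)*((LB*d)*((a/2)⁻¹+D))
        + a^(1-p)*(LC*d) := by ring
    _ ≤ |p| * 2^(1-p)*MA*d + 2^(-p)*L*(2+D)*d + 2*MB*K2*d + LB*(2*K2+K1*D)*d + K1*LC*d :=
        add_le_add (add_le_add (add_le_add (add_le_add E1 E2) E3) E4) E5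
    _ = (|p| * 2^(1-p)*MA + 2^(-p)*L*(2+D) + 2*MB*K2 + LB*(2*K2+K1*D) + K1*LC) * d := by
        ring
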